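/- Uniqueness of significant denominators up to shift-relation: Let K = u/v ∈ F(y) be shift-reduced. Suppose r₁ = a₁/b₁ + q₁/v and r₂ = a₂/b₂ + q₂/v are two residual forms of the same rational function f w.r.t. K, i.e., there exist g₁, g₂ ∈ F(y) with f = K·σ_y(g_i) − g_i + r_i, where deg a_i < deg b_i, gcd(a_i, b_i) = 1, b_i is shift-free and strongly prime with K, and q_i ∈ F[y]. Then b₁ and b₂ are shift-related: every monic irreducible factor of b₁ of positive degree with multiplicity α has a unique shift-equivalent monic irreducible factor of b₂ with multiplicity α, and vice versa. -/

import Mathlib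

open Polynomial

/-- `p` is shift-equivalent to `q`: `p(y) = q(y+m)` for some integer `m`. -/
def ShiftEquiv {F : Type*} [Field F] (p q : F[X]) : Prop :=
  ∃ m : ℤ, p = q.comp (X + Polynomial.C (m : F))

/-- A nonzero polynomial is shift-free if no two of its roots (in an algebraic
closure) differ by an integer unless they are equal. -/
def ShiftFree {F : Type*} [Field F] (p : F[X]) : Prop :=
  p ≠ 0 ∧ ∀ r ∈ p.aroots (AlgebraicClosure F), ∀ s ∈ p.aroots (AlgebraicClosure F),
    (∃ m : ℤ, r - s = (m : AlgebraicClosure F)) → r = s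

/-- `p` is strongly prime with `K = u/v`. -/
def StronglyPrime {F : Type*} [Field F] (p u v : F[X]) : Prop :=
  ∀ i : ℕ, IsCoprime p (u.comp (X - Polynomial.C (i : F))) ∧
    IsCoprime p (v.comp (X + Polynomial.C (i : F)))

/-- Two shift-free polynomials are shift-related: monic irreducible factors
correspond bijectively up to integer shifts, preserving multiplicities. -/
def ShiftRelated {F : Type*} [Field F] (p q : F[X]) : Prop :=
  (∀ f : F[X], f.Monic → Irreducible f → f ∣ p →
    ∃! g : F[X], g.Monic ∧ Irreducible g ∧ g ∣ q ∧
      (∀ n : ℕ, f ^ n ∣ p ↔ g ^ n ∣ q) ∧ ShiftEquiv f g) ∧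
  (∀ g : F[X], g.Monic → Irreducible g → g ∣ q →
    ∃! f : F[X], f.Monic ∧ Irreducible f ∧ f ∣ p ∧
      (∀ n : ℕ, g ^ n ∣ q ↔ f ^ n ∣ p) ∧ ShiftEquiv g f)

namespace SDAux


variable {F : Type*} [Field F]

/-- Composition with `X + C a` then `X + C b` is composition with `X + C (a+b)`. -/
lemma comp_comp (p : F[X]) (a b : F) :
    (p.comp (X + C a)).comp (X + C b) = p.comp (X + C (a + b)) := by
  rw [comp_assoc, add_comp, X_comp, C_comp, add_assoc, ← C_add, add_comm a b]

lemma comp_zero' (p : F[X]) : p.comp (X + C (0:F)) = p := by simp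

lemma apply_algEquiv (c : F) (p : F[X]) :
    (algEquivAevalXAddC c) p = p.comp (X + C c) := by
  simp [algEquivAevalXAddC, algEquivOfCompEqX, ← comp_eq_aeval]

lemma irreducible_comp {p : F[X]} (hp : Irreducible p) (c : F) :
    Irreducible (p.comp (X + C c)) := by
  rw [← apply_algEquiv]
  exact hp.map (algEquivAevalXAddC c)

lemma multiplicity_comp (P q : F[X]) (c : F) :
    multiplicity (P.comp (X + C c)) (q.comp (X + C c)) = multiplicity P q := by
  rw [← apply_algEquiv, ← apply_algEquiv]
  exact multiplicity_map_eq (algEquivAevalXAddC c)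

lemma dvd_comp {P q : F[X]} (h : P ∣ q) (c : F) : P.comp (X + C c) ∣ q.comp (X + C c) := by
  obtain ⟨r, rfl⟩ := h
  exact ⟨r.comp (X + C c), by rw [mul_comp]⟩



variable {F : Type*} [Field F]

noncomputable abbrev am : F[X] →+* RatFunc F := algebraMap F[X] (RatFunc F)

lemma am_ne_zero {q : F[X]} (hq : q ≠ 0) : (am q : RatFunc F) ≠ 0 :=
  RatFunc.algebraMap_ne_zero hq

open scoped Classical in
/-- Order of vanishing of a rational function at the prime `p`, with `⊤` for `0`. -/
noncomputable def ordp (p : F[X]) (f : RatFunc F) : WithTop ℤ :=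
  if f = 0 then ⊤ else ((multiplicity p f.num : ℤ) - (multiplicity p f.denom : ℤ) : ℤ)

lemma ordp_zero (p : F[X]) : ordp p (0 : RatFunc F) = ⊤ := by simp [ordp]

lemma ordp_eq_top_iff {p : F[X]} {f : RatFunc F} : ordp p f = ⊤ ↔ f = 0 := by
  by_cases hf : f = 0 <;> simp [ordp, hf]

lemma finmult {p q : F[X]} (hp : Prime p) (hq : q ≠ 0) : FiniteMultiplicity p q :=
  FiniteMultiplicity.of_not_isUnit hp.not_unit hq

lemma ordp_repr {p : F[X]} (hp : Prime p) {n d : F[X]} (hn : n ≠ 0) (hd : d ≠ 0) :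
    ordp p (am n / am d) = ((multiplicity p n : ℤ) - (multiplicity p d : ℤ) : ℤ) := by
  set f : RatFunc F := am n / am d with hf
  have hf0 : f ≠ 0 := div_ne_zero (am_ne_zero hn) (am_ne_zero hd)
  have hnum : f.num ≠ 0 := RatFunc.num_ne_zero hf0
  have hden : f.denom ≠ 0 := f.denom_ne_zero
  have key : n * f.denom = f.num * d := by
    have h1 : am n / am d = am f.num / am f.denom := by rw [RatFunc.num_div_denom]
    rw [div_eq_div_iff (am_ne_zero hd) (am_ne_zero hden)] at h1
    apply RatFunc.algebraMap_injective F
    rw [map_mul, map_mul]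
    exact h1
  have e1 : multiplicity p n + multiplicity p f.denom
      = multiplicity p f.num + multiplicity p d := by
    rw [← multiplicity_mul hp (finmult hp (by exact mul_ne_zero hn hden)),
      ← multiplicity_mul hp (by rw [← key]; exact finmult hp (mul_ne_zero hn hden)), key]
  have : ordp p f = ((multiplicity p f.num : ℤ) - (multiplicity p f.denom : ℤ) : ℤ) := by
    simp [ordp, hf0]
  rw [this]
  congr 1
  omega

lemma ordp_algebraMap {p : F[X]} (hp : Prime p) {q : F[X]} (hq : q ≠ 0) :
    ordp p (am q) = ((multiplicity p q : ℤ) : WithTop ℤ) := by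
  have h1 : am (F := F) q = am q / am 1 := by simp
  rw [h1, ordp_repr hp hq one_ne_zero]
  have : multiplicity p (1 : F[X]) = 0 :=
    multiplicity_eq_zero.2 fun h => hp.not_unit (isUnit_of_dvd_one h)
  rw [this]
  norm_num

lemma ordp_mul {p : F[X]} (hp : Prime p) (f g : RatFunc F) :
    ordp p (f * g) = ordp p f + ordp p g := by
  by_cases hf : f = 0
  · simp [hf, ordp_zero]
  by_cases hg : g = 0
  · simp [hg, ordp_zero]
  have h1 : f * g = am (f.num * g.num) / am (f.denom * g.denom) := by
    rw [map_mul, map_mul, ← div_mul_div_comm, RatFunc.num_div_denom, RatFunc.num_div_denom]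
  have hfnum := RatFunc.num_ne_zero hf
  have hgnum := RatFunc.num_ne_zero hg
  rw [h1, ordp_repr hp (mul_ne_zero hfnum hgnum) (mul_ne_zero f.denom_ne_zero g.denom_ne_zero),
    multiplicity_mul hp (finmult hp (mul_ne_zero hfnum hgnum)),
    multiplicity_mul hp (finmult hp (mul_ne_zero f.denom_ne_zero g.denom_ne_zero))]
  have h2 : ordp p f = ((multiplicity p f.num : ℤ) - (multiplicity p f.denom : ℤ) : ℤ) := by
    simp [ordp, hf]
  have h3 : ordp p g = ((multiplicity p g.num : ℤ) - (multiplicity p g.denom : ℤ) : ℤ) := by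
    simp [ordp, hg]
  rw [h2, h3, ← WithTop.coe_add]
  congr 1
  push_cast
  ring

lemma ordp_neg {p : F[X]} (hp : Prime p) (f : RatFunc F) : ordp p (-f) = ordp p f := by
  by_cases hf : f = 0
  · simp [hf]
  have hfnum := RatFunc.num_ne_zero hf
  have h1 : -f = am (-f.num) / am f.denom := by
    rw [map_neg, neg_div, RatFunc.num_div_denom]
  have h2 : f = am f.num / am f.denom := (RatFunc.num_div_denom f).symm
  rw [h1, ordp_repr hp (neg_ne_zero.2 hfnum) f.denom_ne_zero, multiplicity_neg]
  conv_rhs => rw [h2, ordp_repr hp hfnum f.denom_ne_zero]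


lemma ordp_add_min {p : F[X]} (hp : Prime p) (f g : RatFunc F) :
    min (ordp p f) (ordp p g) ≤ ordp p (f + g) := by
  by_cases hf : f = 0
  · simp [hf, ordp_zero]
  by_cases hg : g = 0
  · simp [hg, ordp_zero]
  by_cases hfg : f + g = 0
  · simp [hfg, ordp_zero]
  have hfnum := RatFunc.num_ne_zero hf
  have hgnum := RatFunc.num_ne_zero hg
  have hfd := f.denom_ne_zero
  have hgd := g.denom_ne_zero
  set n : F[X] := f.num * g.denom + g.num * f.denom with hn
  have hsum : f + g = am n / am (f.denom * g.denom) := by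
    conv_lhs => rw [← RatFunc.num_div_denom f, ← RatFunc.num_div_denom g]
    rw [div_add_div _ _ (am_ne_zero hfd) (am_ne_zero hgd), hn, map_add, map_mul, map_mul, map_mul]
    congr 1
    ring
  have hn0 : n ≠ 0 := by
    intro h
    apply hfg
    rw [hsum, h, map_zero, zero_div]
  rw [hsum, ordp_repr hp hn0 (mul_ne_zero hfd hgd)]
  have h2 : ordp p f = ((multiplicity p f.num : ℤ) - (multiplicity p f.denom : ℤ) : ℤ) := by
    conv_lhs => rw [← RatFunc.num_div_denom f]
    rw [ordp_repr hp hfnum hfd]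
  have h3 : ordp p g = ((multiplicity p g.num : ℤ) - (multiplicity p g.denom : ℤ) : ℤ) := by
    conv_lhs => rw [← RatFunc.num_div_denom g]
    rw [ordp_repr hp hgnum hgd]
  rw [h2, h3]
  set k : ℕ := min (multiplicity p f.num + multiplicity p g.denom)
    (multiplicity p g.num + multiplicity p f.denom) with hk
  have hd1 : p ^ (multiplicity p f.num + multiplicity p g.denom) ∣ f.num * g.denom := by
    rw [pow_add]
    exact mul_dvd_mul (pow_multiplicity_dvd p f.num) (pow_multiplicity_dvd p g.denom)
  have hd2 : p ^ (multiplicity p g.num + multiplicity p f.denom) ∣ g.num * f.denom := by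
    rw [pow_add]
    exact mul_dvd_mul (pow_multiplicity_dvd p g.num) (pow_multiplicity_dvd p f.denom)
  have hdvd : p ^ k ∣ n := by
    apply dvd_add
    · exact dvd_trans (pow_dvd_pow p (min_le_left _ _)) hd1
    · exact dvd_trans (pow_dvd_pow p (min_le_right _ _)) hd2
  have hkle : k ≤ multiplicity p n := (finmult hp hn0).le_multiplicity_of_pow_dvd hdvd
  rw [multiplicity_mul hp (finmult hp (mul_ne_zero hfd hgd))]
  rw [hk] at hkle
  have hgoal : min ((multiplicity p f.num : ℤ) - (multiplicity p f.denom : ℤ))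
      ((multiplicity p g.num : ℤ) - (multiplicity p g.denom : ℤ))
      ≤ (multiplicity p n : ℤ) - ((multiplicity p f.denom : ℤ) + (multiplicity p g.denom : ℤ)) := by
    omega
  rw [← WithTop.coe_min, WithTop.coe_le_coe]
  push_cast
  push_cast at hgoal
  omega

lemma ordp_add_eq_left {p : F[X]} (hp : Prime p) {f g : RatFunc F}
    (h : ordp p f < ordp p g) : ordp p (f + g) = ordp p f := by
  have h1 : min (ordp p f) (ordp p g) ≤ ordp p (f + g) := ordp_add_min hp f g
  rw [min_eq_left h.le] at h1
  refine le_antisymm ?_ h1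
  by_contra hlt
  push_neg at hlt
  have h2 : min (ordp p (f + g)) (ordp p (-g)) ≤ ordp p (f + g + -g) := ordp_add_min hp _ _
  rw [add_neg_cancel_right, ordp_neg hp] at h2
  have h3 : ordp p f < min (ordp p (f + g)) (ordp p g) := lt_min hlt h
  exact absurd (lt_of_lt_of_le h3 h2) (lt_irrefl _)

lemma ordp_nonneg_of_not_dvd {p : F[X]} (hp : Prime p) {a b : F[X]} (hb : b ≠ 0)
    (hnd : ¬ p ∣ b) : 0 ≤ ordp p (am a / am b) := by
  by_cases ha : a = 0
  · simp [ha, ordp_zero]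
  rw [ordp_repr hp ha hb, multiplicity_eq_zero.2 hnd]
  simp

lemma ordp_ge_neg_mult {p : F[X]} (hp : Prime p) {a b : F[X]} (hb : b ≠ 0) :
    ((-(multiplicity p b : ℤ) : ℤ) : WithTop ℤ) ≤ ordp p (am a / am b) := by
  by_cases ha : a = 0
  · rw [ha, map_zero, zero_div, ordp_zero]
    exact le_top
  rw [ordp_repr hp ha hb, WithTop.coe_le_coe]
  omega

lemma ordp_coprime {p : F[X]} (hp : Prime p) {a b : F[X]} (hcop : IsCoprime a b)
    (hpb : p ∣ b) (ha : a ≠ 0) (hb : b ≠ 0) :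
    ordp p (am a / am b) = (-(multiplicity p b : ℤ) : ℤ) := by
  rw [ordp_repr hp ha hb, multiplicity_eq_zero.2 (fun h => hp.not_unit (hcop.isUnit_of_dvd' h hpb))]
  norm_num

lemma dvd_of_ordp_neg {p : F[X]} (hp : Prime p) {a b : F[X]} (hb : b ≠ 0)
    (h : ordp p (am a / am b) < 0) : p ∣ b := by
  by_cases ha : a = 0
  · rw [ha, map_zero, zero_div, ordp_zero] at h
    exact absurd h (by simp)
  rw [ordp_repr hp ha hb] at h
  have h2 : (multiplicity p a : ℤ) - (multiplicity p b : ℤ) < 0 := by exact_mod_cast h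
  have h3 : 0 < multiplicity p b := by omega
  exact dvd_of_multiplicity_pos h3

section CharZeroPart

variable [CharZero F]

lemma charZeroClosure : CharZero (AlgebraicClosure F) :=
  charZero_of_injective_algebraMap (algebraMap F (AlgebraicClosure F)).injective

lemma aroots_of_dvd {b P : F[X]} (hb : b ≠ 0) (h : P ∣ b) {r : AlgebraicClosure F}
    (hr : aeval r P = 0) : r ∈ b.aroots (AlgebraicClosure F) := by
  rw [mem_aroots]
  obtain ⟨q, rfl⟩ := h
  exact ⟨hb, by rw [map_mul, hr, zero_mul]⟩

lemma exists_aroot {P : F[X]} (hP : Irreducible P) :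
    ∃ r : AlgebraicClosure F, aeval r P = 0 := by
  have hdeg : (P.map (algebraMap F (AlgebraicClosure F))).degree ≠ 0 := by
    rw [degree_map]
    exact (natDegree_pos_iff_degree_pos.mp hP.natDegree_pos).ne'
  obtain ⟨r, hr⟩ := IsAlgClosed.exists_root _ hdeg
  exact ⟨r, by rwa [aeval_def, ← eval_map]⟩

/-- Key shift-freeness lemma: if `p` and its shift by `m` both divide a
shift-free polynomial, then `m = 0`. -/
lemma shiftFree_int_eq_zero {b p : F[X]} (hb : ShiftFree b) (hp : Irreducible p) (m : ℤ)
    (h1 : p ∣ b) (h2 : p.comp (X + C (m : F)) ∣ b) : m = 0 := by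
  haveI := charZeroClosure (F := F)
  obtain ⟨r, hr⟩ := exists_aroot (irreducible_comp hp ((m : ℤ) : F))
  have hr2 : aeval (r + (m : AlgebraicClosure F)) p = 0 := by
    rw [aeval_comp] at hr
    convert hr using 2
    simp [map_intCast]
  have m1 : r ∈ b.aroots (AlgebraicClosure F) := aroots_of_dvd hb.1 h2 hr
  have m2 : (r + (m : AlgebraicClosure F)) ∈ b.aroots (AlgebraicClosure F) :=
    aroots_of_dvd hb.1 h1 hr2
  have := hb.2 _ m2 _ m1 ⟨m, by push_cast; ring⟩
  have hm0 : ((m : ℤ) : AlgebraicClosure F) = 0 := by linear_combination this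
  exact_mod_cast hm0

lemma pm_injective {p : F[X]} (hp : Irreducible p) :
    Function.Injective (fun m : ℤ => p.comp (X + C ((m : ℤ) : F))) := by
  intro m m' h
  simp only at h
  have h2 : p.comp (X + C (((m - m' : ℤ)) : F)) = p := by
    have h3 := congrArg (fun q => q.comp (X + C ((-m' : ℤ) : F))) h
    rw [comp_comp, comp_comp] at h3
    have e1 : ((m : ℤ) : F) + ((-m' : ℤ) : F) = ((m - m' : ℤ) : F) := by push_cast; ring
    have e2 : ((m' : ℤ) : F) + ((-m' : ℤ) : F) = (0 : F) := by push_cast; ring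
    rw [e1, e2] at h3
    rw [h3, C_0, add_zero, comp_X]
  set c : F := ((m - m' : ℤ) : F) with hc
  suffices hcz : c = 0 by
    rw [hc] at hcz
    have : (m - m' : ℤ) = 0 := by exact_mod_cast hcz
    omega
  by_contra hcne
  haveI := charZeroClosure (F := F)
  set E := AlgebraicClosure F
  set φ := algebraMap F E
  set Q := p.map φ with hQ
  have hQ0 : Q ≠ 0 := by
    rw [hQ, Ne, Polynomial.map_eq_zero]
    exact hp.ne_zero
  have hcomp : Q.comp (X + C (φ c)) = Q := by
    have := congrArg (fun q => q.map φ) h2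
    simpa [Polynomial.map_comp] using this
  have hshift : ∀ x : E, Q.eval (x + φ c) = Q.eval x := by
    intro x
    conv_rhs => rw [← hcomp]
    rw [eval_comp]
    simp
  obtain ⟨r, hr⟩ := exists_aroot hp
  have hrQ : Q.IsRoot r := by
    have h5 : eval₂ φ r p = 0 := by rwa [aeval_def] at hr
    rw [IsRoot, hQ, eval_map]
    exact h5
  have key : ∀ k : ℕ, Q.IsRoot (r - k * φ c) := by
    intro k
    induction k with
    | zero => simpa using hrQ
    | succ n ih =>
        have e : r - (n + 1 : ℕ) * φ c + φ c = r - n * φ c := by push_cast; ring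
        have := hshift (r - ((n + 1 : ℕ) : E) * φ c)
        rw [e] at this
        rw [IsRoot, ← this]
        exact ih
  have hinf : Set.Infinite { x : E | Q.IsRoot x } := by
    refine Set.infinite_of_injective_forall_mem (f := fun k : ℕ => r - k * φ c)
      ?_ (fun k => ?_)
    case refine_2 => exact key k
    intro k₁ k₂ hkk
    simp only [sub_right_inj] at hkk
    have hφc : φ c ≠ 0 := fun hz => hcne (by
      have h7 : Function.Injective φ := φ.injective
      exact h7 (by simpa using hz))
    have h8 : ((k₁ : ℕ) : E) = ((k₂ : ℕ) : E) := mul_right_cancel₀ hφc hkk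
    exact_mod_cast h8
  exact hQ0 (Q.eq_zero_of_infinite_isRoot hinf)

lemma monic_pm {p : F[X]} (hmon : p.Monic) (c : F) : (p.comp (X + C c)).Monic :=
  hmon.comp_X_add_C c

lemma finite_shift_dvd {p : F[X]} (hp : Irreducible p) (hmon : p.Monic) {d : F[X]}
    (hd : d ≠ 0) : {m : ℤ | p.comp (X + C ((m : ℤ) : F)) ∣ d}.Finite := by
  classical
  have hsub : {m : ℤ | p.comp (X + C ((m : ℤ) : F)) ∣ d} ⊆
      (fun m : ℤ => p.comp (X + C ((m : ℤ) : F))) ⁻¹'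
        ((UniqueFactorizationMonoid.normalizedFactors d).toFinset : Set F[X]) := by
    intro m hm
    simp only [Set.mem_preimage, Finset.mem_coe, Multiset.mem_toFinset]
    obtain ⟨q, hq, hassoc⟩ :=
      UniqueFactorizationMonoid.exists_mem_normalizedFactors_of_dvd hd
        (irreducible_comp hp _) hm
    have hqn : normalize q = q :=
      UniqueFactorizationMonoid.normalize_normalized_factor q hq
    have hpn : normalize (p.comp (X + C ((m : ℤ) : F))) = p.comp (X + C ((m : ℤ) : F)) :=
      (monic_pm hmon _).normalize_eq_self
    have heq : p.comp (X + C ((m : ℤ) : F)) = q := by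
      rw [← hpn, ← hqn]
      exact normalize_eq_normalize hassoc.dvd hassoc.symm.dvd
    rw [← heq] at hq
    exact hq
  exact Set.Finite.subset (Set.Finite.preimage (Set.injOn_of_injective (pm_injective hp))
    (Set.finite_coe_iff.mp (by exact Set.toFinite _))) hsub

lemma prime_of_irr {p : F[X]} (hp : Irreducible p) : Prime p :=
  (UniqueFactorizationMonoid.irreducible_iff_prime).mp hp

/-- Shifting the prime by one undoes shifting the function by one. -/
lemma ordp_shift {p : F[X]} (hp : Irreducible p) (m : ℤ) (s t : F[X]) (ht : t ≠ 0) :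
    ordp (p.comp (X + C ((m : ℤ) : F))) (am (s.comp (X + C (1:F))) / am (t.comp (X + C (1:F))))
      = ordp (p.comp (X + C (((m - 1) : ℤ) : F))) (am s / am t) := by
  have hkey : ∀ q : F[X], multiplicity (p.comp (X + C ((m : ℤ) : F))) (q.comp (X + C (1:F)))
      = multiplicity (p.comp (X + C (((m - 1) : ℤ) : F))) q := by
    intro q
    have h1 := multiplicity_comp (p.comp (X + C (((m - 1) : ℤ) : F))) q (1 : F)
    rw [comp_comp] at h1
    have e1 : (((m - 1) : ℤ) : F) + 1 = ((m : ℤ) : F) := by push_cast; ring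
    rw [e1] at h1
    exact h1
  by_cases hs : s = 0
  · rw [hs, zero_comp, map_zero, zero_div, zero_div, ordp_zero, ordp_zero]
  have hprime1 : Prime (p.comp (X + C ((m : ℤ) : F))) := prime_of_irr (irreducible_comp hp _)
  have hprime2 : Prime (p.comp (X + C (((m - 1) : ℤ) : F))) :=
    prime_of_irr (irreducible_comp hp _)
  rw [ordp_repr hprime1 (comp_X_add_C_ne_zero_iff.mpr hs) (comp_X_add_C_ne_zero_iff.mpr ht),
    ordp_repr hprime2 hs ht, hkey, hkey]

/-- Strong primality: positive shifts of a factor of `b` do not divide `u`. -/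
lemma sp_u {b u v : F[X]} (hsp : StronglyPrime b u v) {p : F[X]} (hp : Irreducible p)
    (hpb : p ∣ b) : ∀ m : ℤ, 0 ≤ m → ¬ p.comp (X + C ((m : ℤ) : F)) ∣ u := by
  intro m hm hdvd
  have hpeq : (p.comp (X + C ((m : ℤ) : F))).comp (X + C (-((m : ℤ) : F))) = p := by
    rw [comp_comp, add_neg_cancel, C_0, add_zero, comp_X]
  have h1 : p ∣ u.comp (X + C (-((m : ℤ) : F))) := by
    rw [← hpeq]
    exact dvd_comp hdvd _
  have e1 : X + C (-((m : ℤ) : F)) = X - C ((m.toNat : ℕ) : F) := by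
    rw [sub_eq_add_neg, ← C_neg]
    congr 2
    have : ((m.toNat : ℕ) : F) = ((m : ℤ) : F) := by
      rw [← Int.cast_natCast]
      congr 1
      omega
    rw [this]
  rw [e1] at h1
  exact hp.not_isUnit ((hsp m.toNat).1.isUnit_of_dvd' hpb h1)

/-- Strong primality: nonpositive shifts of a factor of `b` do not divide `v`. -/
lemma sp_v {b u v : F[X]} (hsp : StronglyPrime b u v) {p : F[X]} (hp : Irreducible p)
    (hpb : p ∣ b) : ∀ m : ℤ, m ≤ 0 → ¬ p.comp (X + C ((m : ℤ) : F)) ∣ v := by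
  intro m hm hdvd
  have hpeq : (p.comp (X + C ((m : ℤ) : F))).comp (X + C (-((m : ℤ) : F))) = p := by
    rw [comp_comp, add_neg_cancel, C_0, add_zero, comp_X]
  have h1 : p ∣ v.comp (X + C (-((m : ℤ) : F))) := by
    rw [← hpeq]
    exact dvd_comp hdvd _
  have e1 : X + C (-((m : ℤ) : F)) = X + C (((-m).toNat : ℕ) : F) := by
    congr 2
    rw [← Int.cast_neg, ← Int.cast_natCast]
    congr 1
    omega
  rw [e1] at h1
  exact hp.not_isUnit ((hsp (-m).toNat).2.isUnit_of_dvd' hpb h1)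

set_option maxHeartbeats 1600000 in
/-- Main technical lemma: every irreducible factor of `b₁` has a shift with at
least the same multiplicity in `b₂`. -/
lemma lemA (u v a₁ b₁ a₂ b₂ c s t : F[X]) (hv : v ≠ 0) (ht : t ≠ 0)
    (hsf₁ : ShiftFree b₁) (hsf₂ : ShiftFree b₂)
    (hcop₁ : IsCoprime a₁ b₁) (hcop₂ : IsCoprime a₂ b₂)
    (hsp₁ : StronglyPrime b₁ u v)
    (hE : am a₁ / am b₁ - am a₂ / am b₂ + am c / am v
      = (am u / am v) * (am (s.comp (X + C (1:F))) / am (t.comp (X + C (1:F)))) - am s / am t)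
    {p : F[X]} (hp : Irreducible p) (hmon : p.Monic) (hpb : p ∣ b₁) :
    ∃ m : ℤ, p.comp (X + C ((m : ℤ) : F)) ∣ b₂ ∧
      multiplicity p b₁ ≤ multiplicity (p.comp (X + C ((m : ℤ) : F))) b₂ := by
  classical
  set P : ℤ → F[X] := fun m => p.comp (X + C ((m : ℤ) : F)) with hP
  have hprime : ∀ m : ℤ, Prime (P m) := fun m => prime_of_irr (irreducible_comp hp _)
  have hpm0 : P 0 = p := by
    show p.comp (X + C (((0:ℤ) : ℤ) : F)) = p
    norm_num
  have hb₁0 : b₁ ≠ 0 := hsf₁.1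
  have hb₂0 : b₂ ≠ 0 := hsf₂.1
  have hb₁nu : ¬ IsUnit b₁ := fun h => hp.not_isUnit (isUnit_of_dvd_unit hpb h)
  have hu0 : u ≠ 0 := by
    intro h
    have h1 := (hsp₁ 0).1
    rw [h, zero_comp] at h1
    exact hb₁nu (isCoprime_zero_right.mp h1)
  have ha₁0 : a₁ ≠ 0 := by
    intro h
    rw [h] at hcop₁
    exact hb₁nu (isCoprime_zero_left.mp hcop₁)
  set α : ℕ := multiplicity p b₁ with hαdef
  have hα1 : 1 ≤ α := by
    have := (finmult (hpm0 ▸ hprime 0) hb₁0).le_multiplicity_of_pow_dvd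
      (k := 1) (by simpa using hpb)
    omega
  have hnotb₁ : ∀ m : ℤ, m ≠ 0 → ¬ P m ∣ b₁ :=
    fun m hm hd => hm (shiftFree_int_eq_zero hsf₁ hp m hpb hd)
  have huniqb₂ : ∀ m m' : ℤ, P m ∣ b₂ → P m' ∣ b₂ → m = m' := by
    intro m m' h1 h2
    have h3 : (P m').comp (X + C (((m - m' : ℤ)) : F)) = P m := by
      show (p.comp (X + C ((m' : ℤ) : F))).comp _ = _
      rw [comp_comp]
      congr 2
      push_cast
      ring
    have h4 : (P m').comp (X + C (((m - m' : ℤ)) : F)) ∣ b₂ := by rw [h3]; exact h1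
    have := shiftFree_int_eq_zero hsf₂ (irreducible_comp hp _) (m - m') h2 h4
    omega
  have husp : ∀ m : ℤ, 0 ≤ m → multiplicity (P m) u = 0 :=
    fun m hm => multiplicity_eq_zero.2 (sp_u hsp₁ hp hpb m hm)
  have hvsp : ∀ m : ℤ, m ≤ 0 → multiplicity (P m) v = 0 :=
    fun m hm => multiplicity_eq_zero.2 (sp_v hsp₁ hp hpb m hm)
  set A : RatFunc F := am a₁ / am b₁ with hA
  set B : RatFunc F := am a₂ / am b₂ with hB
  set Cc : RatFunc F := am c / am v with hCc
  set w' : RatFunc F := am s / am t with hw'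
  set σw : RatFunc F := am (s.comp (X + C (1:F))) / am (t.comp (X + C (1:F))) with hσw
  set T1 : RatFunc F := (am u / am v) * σw with hT1def
  set Ee : ℤ → WithTop ℤ := fun m => ordp (P m) w' with hEe
  have hEshift : ∀ m : ℤ, ordp (P m) σw = Ee (m - 1) := fun m => ordp_shift hp m s t ht
  have hordT1 : ∀ m : ℤ, ordp (P m) T1
      = (((multiplicity (P m) u : ℤ) - (multiplicity (P m) v : ℤ) : ℤ) : WithTop ℤ)
        + Ee (m - 1) := by
    intro m
    rw [hT1def, ordp_mul (hprime m), ordp_repr (hprime m) hu0 hv, hEshift m]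
  have hordA : ∀ m : ℤ, m ≠ 0 → (0 : WithTop ℤ) ≤ ordp (P m) A :=
    fun m hm => ordp_nonneg_of_not_dvd (hprime m) hb₁0 (hnotb₁ m hm)
  have hordA0 : ordp (P 0) A = ((-(α : ℤ) : ℤ) : WithTop ℤ) := by
    rw [hpm0, hA]
    exact ordp_coprime (hpm0 ▸ hprime 0) hcop₁ hpb ha₁0 hb₁0
  have hordCv : ∀ m : ℤ,
      ((-(multiplicity (P m) v : ℤ) : ℤ) : WithTop ℤ) ≤ ordp (P m) Cc :=
    fun m => ordp_ge_neg_mult (hprime m) hv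
  have hordC0 : ∀ m : ℤ, m ≤ 0 → (0 : WithTop ℤ) ≤ ordp (P m) Cc :=
    fun m hm => ordp_nonneg_of_not_dvd (hprime m) hv (sp_v hsp₁ hp hpb m hm)
  have hordB : ∀ m : ℤ, ¬ P m ∣ b₂ → (0 : WithTop ℤ) ≤ ordp (P m) B :=
    fun m hm => ordp_nonneg_of_not_dvd (hprime m) hb₂0 hm
  -- detection on the positive side
  have claim_pos : ∀ m : ℤ, 0 ≤ m → Ee m < 0 → 0 ≤ Ee (m + 1) → P (m + 1) ∣ b₂ := by
    intro m hm hEm hEm1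
    by_contra hnd
    obtain ⟨em, hem⟩ := WithTop.ne_top_iff_exists.mp hEm.ne_top
    have hem0 : em < 0 := by
      rw [← hem] at hEm
      exact_mod_cast hEm
    set vv : ℤ := (multiplicity (P (m + 1)) v : ℤ) with hvv
    have hvv0 : 0 ≤ vv := by positivity
    have hT1v : ordp (P (m + 1)) T1 = ((em - vv : ℤ) : WithTop ℤ) := by
      rw [hordT1 (m + 1), show m + 1 - 1 = m from by ring, ← hem,
        husp (m + 1) (by omega), ← WithTop.coe_add]
      congr 1
      push_cast
      omega
    have hlt : ordp (P (m + 1)) T1 < ordp (P (m + 1)) (-w') := by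
      rw [hT1v, ordp_neg (hprime _)]
      refine lt_of_lt_of_le ?_ hEm1
      exact_mod_cast (by omega : (em - vv : ℤ) < 0)
    have hRval : ordp (P (m + 1)) (T1 - w') = ((em - vv : ℤ) : WithTop ℤ) := by
      rw [sub_eq_add_neg, ordp_add_eq_left (hprime _) hlt, hT1v]
    have hneg0 : (((-vv : ℤ)) : WithTop ℤ) ≤ 0 := by exact_mod_cast (by omega : (-vv : ℤ) ≤ 0)
    have hLge : (((-vv : ℤ)) : WithTop ℤ) ≤ ordp (P (m + 1)) (A - B + Cc) := by
      have h1 := ordp_add_min (hprime (m + 1)) (A - B) Cc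
      have h2 := ordp_add_min (hprime (m + 1)) A (-B)
      rw [← sub_eq_add_neg] at h2
      refine le_trans (le_min (le_trans ?_ h2) ?_) h1
      · exact le_min (le_trans hneg0 (hordA _ (by omega)))
          (le_trans hneg0 (by rw [ordp_neg (hprime _)]; exact hordB _ hnd))
      · exact hordCv (m + 1)
    rw [hE, hRval] at hLge
    have : (-vv : ℤ) ≤ em - vv := by exact_mod_cast hLge
    omega
  -- detection on the negative side
  have claim_neg : ∀ m : ℤ, m ≤ -1 → Ee m < 0 → 0 ≤ Ee (m - 1) → P m ∣ b₂ := by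
    intro m hm hEm hEm1
    by_contra hnd
    have hT1ge : (0 : WithTop ℤ) ≤ ordp (P m) T1 := by
      rw [hordT1 m, hvsp m (by omega)]
      refine add_nonneg ?_ hEm1
      exact_mod_cast (by omega : (0 : ℤ) ≤ (multiplicity (P m) u : ℤ) - ((0 : ℕ) : ℤ))
    have hRval : ordp (P m) (T1 - w') = Ee m := by
      rw [sub_eq_neg_add, ordp_add_eq_left (hprime m)
        (by rw [ordp_neg (hprime m)]; exact lt_of_lt_of_le hEm hT1ge), ordp_neg (hprime m)]
    have hLge : (0 : WithTop ℤ) ≤ ordp (P m) (A - B + Cc) := by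
      have h1 := ordp_add_min (hprime m) (A - B) Cc
      have h2 := ordp_add_min (hprime m) A (-B)
      rw [← sub_eq_add_neg] at h2
      refine le_trans (le_min (le_trans ?_ h2) ?_) h1
      · exact le_min (hordA _ (by omega))
          (by rw [ordp_neg (hprime _)]; exact hordB _ hnd)
      · exact hordC0 m (by omega)
    rw [hE, hRval] at hLge
    exact absurd (lt_of_lt_of_le hEm hLge) (lt_irrefl _)
  -- boundedness of the set of poles
  have hfinneg : {m : ℤ | Ee m < 0}.Finite := by
    refine Set.Finite.subset (finite_shift_dvd hp hmon ht) ?_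
    intro m hm
    exact dvd_of_ordp_neg (hprime m) ht hm
  obtain ⟨Mup, hMup⟩ : ∃ M : ℤ, ∀ m : ℤ, M ≤ m → 0 ≤ Ee m := by
    obtain ⟨M, hM⟩ := hfinneg.bddAbove
    refine ⟨M + 1, fun m hm => not_lt.mp (fun hc => ?_)⟩
    have := hM hc
    omega
  obtain ⟨Mdn, hMdn⟩ : ∃ M : ℤ, ∀ m : ℤ, m ≤ M → 0 ≤ Ee m := by
    obtain ⟨M, hM⟩ := hfinneg.bddBelow
    refine ⟨M - 1, fun m hm => not_lt.mp (fun hc => ?_)⟩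
    have := hM hc
    omega
  -- regularity chains
  have chain_pos : ∀ z : ℤ, 0 ≤ z → (∀ m : ℤ, z ≤ m → ¬ P (m + 1) ∣ b₂) →
      ∀ m : ℤ, z ≤ m → 0 ≤ Ee m := by
    intro z hz hno
    set Mb := max Mup z with hMb
    have base : z ≤ Mb → ∀ m : ℤ, Mb ≤ m → 0 ≤ Ee m :=
      fun _ m hm => hMup m (le_trans (le_max_left _ _) hm)
    have step : ∀ n : ℤ, n ≤ Mb → (z ≤ n → ∀ m : ℤ, n ≤ m → 0 ≤ Ee m) →
        (z ≤ n - 1 → ∀ m : ℤ, n - 1 ≤ m → 0 ≤ Ee m) := by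
      intro n _ ih hz1 m hm
      by_cases hcase : n ≤ m
      · exact ih (by omega) m hcase
      · have hmeq : m + 1 = n := by omega
        by_contra hneg
        push_neg at hneg
        have hEn : 0 ≤ Ee (m + 1) := by
          rw [hmeq]
          exact ih (by omega) n le_rfl
        have hd := claim_pos m (by omega) hneg hEn
        exact hno m (by omega) hd
    have key := Int.le_induction_down (motive := fun n _ => z ≤ n → ∀ m : ℤ, n ≤ m → 0 ≤ Ee m)
      base step
    intro m hm
    rcases le_or_gt m Mb with h | h
    · exact key m h hm m le_rfl
    · exact hMup m (by omega)
  have chain_neg : ∀ z : ℤ, z ≤ -1 → (∀ m : ℤ, m ≤ z → ¬ P m ∣ b₂) →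
      ∀ m : ℤ, m ≤ z → 0 ≤ Ee m := by
    intro z hz hno
    set Mb := min Mdn z with hMb
    have base : Mb ≤ z → ∀ m : ℤ, m ≤ Mb → 0 ≤ Ee m :=
      fun _ m hm => hMdn m (le_trans hm (min_le_left _ _))
    have step : ∀ n : ℤ, Mb ≤ n → (n ≤ z → ∀ m : ℤ, m ≤ n → 0 ≤ Ee m) →
        (n + 1 ≤ z → ∀ m : ℤ, m ≤ n + 1 → 0 ≤ Ee m) := by
      intro n _ ih hz1 m hm
      by_cases hcase : m ≤ n
      · exact ih (by omega) m hcase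
      · have hmeq : m - 1 = n := by omega
        by_contra hneg
        push_neg at hneg
        have hEn : 0 ≤ Ee (m - 1) := by
          rw [hmeq]
          exact ih (by omega) n le_rfl
        have hd := claim_neg m (by omega) hneg hEn
        exact hno m (by omega) hd
    have key := Int.le_induction (motive := fun n _ => n ≤ z → ∀ m : ℤ, m ≤ n → 0 ≤ Ee m)
      base step
    intro m hm
    rcases le_or_gt Mb m with h | h
    · exact key m (by omega) hm m le_rfl
    · exact hMdn m (by omega)
  -- the index-0 contradiction engine
  have idx0 : ¬ P 0 ∣ b₂ →
      ((-(α : ℤ) : ℤ) : WithTop ℤ) < min (Ee (-1)) (Ee 0) → False := by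
    intro hB0 hmin
    have hT1v : ordp (P 0) T1 = Ee (-1) := by
      rw [hordT1 0, husp 0 le_rfl, hvsp 0 le_rfl]
      norm_num
    have hRge : min (Ee (-1)) (Ee 0) ≤ ordp (P 0) (T1 - w') := by
      have h1 := ordp_add_min (hprime 0) T1 (-w')
      rw [ordp_neg (hprime 0), hT1v, ← sub_eq_add_neg] at h1
      exact h1
    have hnegα : ((-(α : ℤ) : ℤ) : WithTop ℤ) < 0 := by
      exact_mod_cast (by omega : (-(α : ℤ) : ℤ) < 0)
    have hlt : ((-(α : ℤ) : ℤ) : WithTop ℤ) < ordp (P 0) A := by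
      have hAeq : A = T1 - w' + B - Cc := by
        rw [hA, hB, hCc, hT1def, hσw, hw']
        linear_combination hE
      rw [hAeq]
      have h1 := ordp_add_min (hprime 0) (T1 - w' + B) (-Cc)
      rw [← sub_eq_add_neg] at h1
      refine lt_of_lt_of_le (lt_min ?_ ?_) h1
      · have h2 := ordp_add_min (hprime 0) (T1 - w') B
        refine lt_of_lt_of_le (lt_min ?_ ?_) h2
        · exact lt_of_lt_of_le hmin hRge
        · exact lt_of_lt_of_le hnegα (hordB 0 hB0)
      · rw [ordp_neg (hprime 0)]
        exact lt_of_lt_of_le hnegα (hordC0 0 le_rfl)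
    rw [hordA0] at hlt
    exact lt_irrefl _ hlt
  by_cases hex : ∃ m : ℤ, P m ∣ b₂
  · obtain ⟨m₀, hm₀⟩ := hex
    have hbu₂ : ¬ IsUnit b₂ := fun h =>
      (hprime m₀).not_unit (isUnit_of_dvd_unit hm₀ h)
    have ha₂0 : a₂ ≠ 0 := by
      intro h
      rw [h] at hcop₂
      exact hbu₂ (isCoprime_zero_left.mp hcop₂)
    have hordB2 : ordp (P m₀) B = ((-(multiplicity (P m₀) b₂ : ℤ) : ℤ) : WithTop ℤ) :=
      ordp_coprime (hprime m₀) hcop₂ hm₀ ha₂0 hb₂0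
    rcases lt_trichotomy m₀ 0 with hneg | hzero | hpos
    · -- m₀ ≤ -1 : mirror case
      have hS1 : ∀ m : ℤ, 0 ≤ m → 0 ≤ Ee m := by
        refine chain_pos 0 le_rfl (fun m hm hd => ?_) 
        have := huniqb₂ _ _ hd hm₀
        omega
      have hS2 : ∀ m : ℤ, m ≤ m₀ - 1 → 0 ≤ Ee m := by
        refine chain_neg (m₀ - 1) (by omega) (fun m hm hd => ?_)
        have := huniqb₂ _ _ hd hm₀
        omega
      have hB0 : ¬ P 0 ∣ b₂ := fun hd => by
        have := huniqb₂ _ _ hd hm₀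
        omega
      have hidx : Ee (-1) ≤ ((-(α : ℤ) : ℤ) : WithTop ℤ) := by
        by_contra hgt
        push_neg at hgt
        refine idx0 hB0 (lt_min hgt ?_)
        refine lt_of_lt_of_le ?_ (hS1 0 le_rfl)
        exact_mod_cast (by omega : (-(α : ℤ) : ℤ) < 0)
      -- downward chain from -1 to m₀
      have step2 : ∀ n : ℤ, n ≤ -1 → (m₀ ≤ n → Ee n ≤ ((-(α : ℤ) : ℤ) : WithTop ℤ)) →
          (m₀ ≤ n - 1 → Ee (n - 1) ≤ ((-(α : ℤ) : ℤ) : WithTop ℤ)) := by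
        intro n hn ih hm₀n
        have hEn : Ee n ≤ ((-(α : ℤ) : ℤ) : WithTop ℤ) := ih (by omega)
        obtain ⟨en, hen⟩ := WithTop.ne_top_iff_exists.mp
          (ne_top_of_le_ne_top (WithTop.coe_ne_top) hEn)
        have hen' : en ≤ -(α : ℤ) := by
          rw [← hen] at hEn
          exact_mod_cast hEn
        have hEnlt : Ee n < 0 := by
          rw [← hen]
          exact_mod_cast (by omega : en < 0)
        -- at index n : L has nonneg order, so ord T1 = Ee n
        have hLge : (0 : WithTop ℤ) ≤ ordp (P n) (A - B + Cc) := by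
          have h1 := ordp_add_min (hprime n) (A - B) Cc
          have h2 := ordp_add_min (hprime n) A (-B)
          rw [← sub_eq_add_neg] at h2
          refine le_trans (le_min (le_trans ?_ h2) ?_) h1
          · refine le_min (hordA _ (by omega)) ?_
            rw [ordp_neg (hprime _)]
            refine hordB _ (fun hd => ?_)
            have := huniqb₂ _ _ hd hm₀
            omega
          · exact hordC0 n (by omega)
        rw [hE] at hLge
        have hT1val : ordp (P n) T1 = Ee n := by
          have h3 : ordp (P n) (w' + (T1 - w')) = ordp (P n) w' := by
            refine ordp_add_eq_left (hprime n) ?_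
            exact lt_of_lt_of_le hEnlt hLge
          rw [show w' + (T1 - w') = T1 from by ring] at h3
          exact h3
        have hT1u : ordp (P n) T1
            = (((multiplicity (P n) u : ℤ) : ℤ) : WithTop ℤ) + Ee (n - 1) := by
          rw [hordT1 n, hvsp n (by omega)]
          norm_num
        have hcomb : (((multiplicity (P n) u : ℤ) : ℤ) : WithTop ℤ) + Ee (n - 1)
            = ((en : ℤ) : WithTop ℤ) := by
          rw [← hT1u, hT1val, ← hen]
        have hfinE1 : Ee (n - 1) ≠ ⊤ := by
          intro htop
          rw [htop, add_top] at hcomb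
          exact WithTop.top_ne_coe hcomb
        obtain ⟨en1, hen1⟩ := WithTop.ne_top_iff_exists.mp hfinE1
        have heq2 : (multiplicity (P n) u : ℤ) + en1 = en := by
          rw [← hen1, ← WithTop.coe_add] at hcomb
          exact_mod_cast hcomb
        rw [← hen1]
        exact_mod_cast (by omega : en1 ≤ -(α : ℤ))
      have hmid := Int.le_induction_down
        (motive := fun n _ => m₀ ≤ n → Ee n ≤ ((-(α : ℤ) : ℤ) : WithTop ℤ)) (m := -1)
        (fun _ => hidx) step2
      -- conclude at m₀
      have hEm₀ : Ee m₀ ≤ ((-(α : ℤ) : ℤ) : WithTop ℤ) := hmid m₀ (by omega) le_rfl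
      have hT1ge : (0 : WithTop ℤ) ≤ ordp (P m₀) T1 := by
        rw [hordT1 m₀, hvsp m₀ (by omega)]
        refine add_nonneg ?_ (hS2 (m₀ - 1) le_rfl)
        exact_mod_cast (by omega : (0:ℤ) ≤ (multiplicity (P m₀) u : ℤ) - ((0:ℕ) : ℤ))
      have hwneg : ordp (P m₀) (-w') < ordp (P m₀) T1 := by
        rw [ordp_neg (hprime m₀)]
        refine lt_of_le_of_lt hEm₀ (lt_of_lt_of_le ?_ hT1ge)
        exact_mod_cast (by omega : (-(α:ℤ) : ℤ) < 0)
      have hRval : ordp (P m₀) (T1 - w') = Ee m₀ := by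
        rw [sub_eq_neg_add, ordp_add_eq_left (hprime m₀) hwneg, ordp_neg (hprime m₀)]
      have hBeq : B = -(T1 - w') + (A + Cc) := by
        rw [hA, hB, hCc, hT1def, hσw, hw']
        linear_combination -hE
      have hltAC : ordp (P m₀) (-(T1 - w')) < ordp (P m₀) (A + Cc) := by
        rw [ordp_neg (hprime m₀), hRval]
        have hACge : (0 : WithTop ℤ) ≤ ordp (P m₀) (A + Cc) := by
          refine le_trans (le_min (hordA _ (by omega)) (hordC0 m₀ (by omega)))
            (ordp_add_min (hprime m₀) A Cc)
        refine lt_of_le_of_lt hEm₀ (lt_of_lt_of_le ?_ hACge)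
        exact_mod_cast (by omega : (-(α:ℤ) : ℤ) < 0)
      have hordBval : ordp (P m₀) B = Ee m₀ := by
        rw [hBeq, ordp_add_eq_left (hprime m₀) hltAC, ordp_neg (hprime m₀), hRval]
      have h5 : ((-(multiplicity (P m₀) b₂ : ℤ) : ℤ) : WithTop ℤ)
          ≤ ((-(α : ℤ) : ℤ) : WithTop ℤ) := by
        rw [← hordB2, hordBval]
        exact hEm₀
      have h6 : (-(multiplicity (P m₀) b₂ : ℤ) : ℤ) ≤ -(α : ℤ) := by exact_mod_cast h5
      refine ⟨m₀, hm₀, ?_⟩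
      show multiplicity p b₁ ≤ multiplicity (P m₀) b₂
      omega
    · -- m₀ = 0
      subst hzero
      have hS1 : ∀ m : ℤ, 0 ≤ m → 0 ≤ Ee m := by
        refine chain_pos 0 le_rfl (fun m hm hd => ?_)
        have := huniqb₂ _ _ hd hm₀
        omega
      have hS2 : ∀ m : ℤ, m ≤ -1 → 0 ≤ Ee m := by
        refine chain_neg (-1) le_rfl (fun m hm hd => ?_)
        have := huniqb₂ _ _ hd hm₀
        omega
      have hT1v : ordp (P 0) T1 = Ee (-1) := by
        rw [hordT1 0, husp 0 le_rfl, hvsp 0 le_rfl]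
        norm_num
      have hRge : (0 : WithTop ℤ) ≤ ordp (P 0) (T1 - w') := by
        have h1 := ordp_add_min (hprime 0) T1 (-w')
        rw [ordp_neg (hprime 0), hT1v, ← sub_eq_add_neg] at h1
        exact le_trans (le_min (hS2 (-1) le_rfl) (hS1 0 le_rfl)) h1
      have hABge : (0 : WithTop ℤ) ≤ ordp (P 0) (A - B) := by
        have hABeq : A - B = T1 - w' - Cc := by
          rw [hA, hB, hCc, hT1def, hσw, hw']
          linear_combination hE
        rw [hABeq, sub_eq_add_neg]
        refine le_trans (le_min hRge ?_) (ordp_add_min (hprime 0) _ _)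
        rw [ordp_neg (hprime 0)]
        exact hordC0 0 le_rfl
      by_cases hle : α ≤ multiplicity (P 0) b₂
      · exact ⟨0, hm₀, hle⟩
      · exfalso
        push_neg at hle
        have hAltB : ordp (P 0) A < ordp (P 0) (-B) := by
          rw [ordp_neg (hprime 0), hordA0, hordB2]
          exact_mod_cast (by omega : (-(α:ℤ) : ℤ) < -((multiplicity (P 0) b₂ : ℤ) : ℤ))
        have habv : ordp (P 0) (A - B) = ordp (P 0) A := by
          rw [sub_eq_add_neg]
          exact ordp_add_eq_left (hprime 0) hAltB
        rw [habv, hordA0] at hABge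
        have : (0 : ℤ) ≤ -(α : ℤ) := by exact_mod_cast hABge
        omega
    · -- m₀ ≥ 1
      have hS2 : ∀ m : ℤ, m ≤ -1 → 0 ≤ Ee m := by
        refine chain_neg (-1) le_rfl (fun m hm hd => ?_)
        have := huniqb₂ _ _ hd hm₀
        omega
      have hS1 : ∀ m : ℤ, m₀ ≤ m → 0 ≤ Ee m := by
        refine chain_pos m₀ (by omega) (fun m hm hd => ?_)
        have := huniqb₂ _ _ hd hm₀
        omega
      have hB0 : ¬ P 0 ∣ b₂ := fun hd => by
        have := huniqb₂ _ _ hd hm₀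
        omega
      have hidx : Ee 0 ≤ ((-(α : ℤ) : ℤ) : WithTop ℤ) := by
        by_contra hgt
        push_neg at hgt
        refine idx0 hB0 (lt_min ?_ hgt)
        refine lt_of_lt_of_le ?_ (hS2 (-1) le_rfl)
        exact_mod_cast (by omega : (-(α : ℤ) : ℤ) < 0)
      -- upward chain from 0 to m₀ - 1
      have step3 : ∀ n : ℤ, 0 ≤ n → (n ≤ m₀ - 1 → Ee n ≤ ((-(α : ℤ) : ℤ) : WithTop ℤ)) →
          (n + 1 ≤ m₀ - 1 → Ee (n + 1) ≤ ((-(α : ℤ) : ℤ) : WithTop ℤ)) := by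
        intro n hn ih hnm₀
        have hEn : Ee n ≤ ((-(α : ℤ) : ℤ) : WithTop ℤ) := ih (by omega)
        obtain ⟨en, hen⟩ := WithTop.ne_top_iff_exists.mp
          (ne_top_of_le_ne_top (WithTop.coe_ne_top) hEn)
        have hen' : en ≤ -(α : ℤ) := by
          rw [← hen] at hEn
          exact_mod_cast hEn
        set vv : ℤ := (multiplicity (P (n + 1)) v : ℤ) with hvv
        have hvv0 : 0 ≤ vv := by positivity
        have hT1v : ordp (P (n + 1)) T1 = ((en - vv : ℤ) : WithTop ℤ) := by
          rw [hordT1 (n + 1), show n + 1 - 1 = n from by ring, ← hen,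
            husp (n + 1) (by omega), ← WithTop.coe_add]
          congr 1
          push_cast
          omega
        by_contra hgt
        push_neg at hgt
        have hLge : (((-vv : ℤ)) : WithTop ℤ) ≤ ordp (P (n + 1)) (A - B + Cc) := by
          have h1 := ordp_add_min (hprime (n + 1)) (A - B) Cc
          have h2 := ordp_add_min (hprime (n + 1)) A (-B)
          rw [← sub_eq_add_neg] at h2
          have hneg0 : (((-vv : ℤ)) : WithTop ℤ) ≤ 0 := by
            exact_mod_cast (by omega : (-vv : ℤ) ≤ 0)
          refine le_trans (le_min (le_trans ?_ h2) ?_) h1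
          · refine le_min (le_trans hneg0 (hordA _ (by omega))) ?_
            refine le_trans hneg0 ?_
            rw [ordp_neg (hprime _)]
            refine hordB _ (fun hd => ?_)
            have := huniqb₂ _ _ hd hm₀
            omega
          · exact hordCv (n + 1)
        rw [hE] at hLge
        have hc1 : ((en - vv : ℤ) : WithTop ℤ) < ordp (P (n + 1)) (T1 - w') := by
          refine lt_of_lt_of_le ?_ hLge
          exact_mod_cast (by omega : (en - vv : ℤ) < -vv)
        have hc2 : ((en - vv : ℤ) : WithTop ℤ) < ordp (P (n + 1)) w' := by
          refine lt_of_le_of_lt ?_ hgt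
          exact_mod_cast (by omega : (en - vv : ℤ) ≤ -(α : ℤ))
        have hT1ge : min (ordp (P (n + 1)) (T1 - w')) (ordp (P (n + 1)) w')
            ≤ ordp (P (n + 1)) T1 := by
          have h3 := ordp_add_min (hprime (n + 1)) (T1 - w') w'
          rw [sub_add_cancel] at h3
          exact h3
        rw [hT1v] at hT1ge
        exact absurd (lt_of_lt_of_le (lt_min hc1 hc2) hT1ge) (lt_irrefl _)
      have hmid := Int.le_induction
        (motive := fun n _ => n ≤ m₀ - 1 → Ee n ≤ ((-(α : ℤ) : ℤ) : WithTop ℤ)) (m := 0)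
        (fun _ => hidx) step3
      -- conclude at m₀
      have hEm₀1 : Ee (m₀ - 1) ≤ ((-(α : ℤ) : ℤ) : WithTop ℤ) :=
        hmid (m₀ - 1) (by omega) le_rfl
      obtain ⟨e1, he1⟩ := WithTop.ne_top_iff_exists.mp
        (ne_top_of_le_ne_top (WithTop.coe_ne_top) hEm₀1)
      have he1' : e1 ≤ -(α : ℤ) := by
        rw [← he1] at hEm₀1
        exact_mod_cast hEm₀1
      set vv : ℤ := (multiplicity (P m₀) v : ℤ) with hvv
      have hvv0 : 0 ≤ vv := by positivity
      have hT1v : ordp (P m₀) T1 = ((e1 - vv : ℤ) : WithTop ℤ) := by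
        rw [hordT1 m₀, ← he1, husp m₀ (by omega), ← WithTop.coe_add]
        congr 1
        push_cast
        omega
      have hwge : ordp (P m₀) T1 < ordp (P m₀) (-w') := by
        rw [ordp_neg (hprime m₀), hT1v]
        refine lt_of_lt_of_le ?_ (hS1 m₀ le_rfl)
        exact_mod_cast (by omega : (e1 - vv : ℤ) < 0)
      have hRval : ordp (P m₀) (T1 - w') = ((e1 - vv : ℤ) : WithTop ℤ) := by
        rw [sub_eq_add_neg, ordp_add_eq_left (hprime m₀) hwge, hT1v]
      have hBeq : B = -(T1 - w') + (A + Cc) := by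
        rw [hA, hB, hCc, hT1def, hσw, hw']
        linear_combination -hE
      have hltAC : ordp (P m₀) (-(T1 - w')) < ordp (P m₀) (A + Cc) := by
        rw [ordp_neg (hprime m₀), hRval]
        have hACge : (((-vv : ℤ)) : WithTop ℤ) ≤ ordp (P m₀) (A + Cc) := by
          refine le_trans (le_min (le_trans ?_ (hordA _ (by omega))) (hordCv m₀))
            (ordp_add_min (hprime m₀) A Cc)
          exact_mod_cast (by omega : (-vv : ℤ) ≤ 0)
        refine lt_of_lt_of_le ?_ hACge
        exact_mod_cast (by omega : (e1 - vv : ℤ) < -vv)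
      have hordBval : ordp (P m₀) B = ((e1 - vv : ℤ) : WithTop ℤ) := by
        rw [hBeq, ordp_add_eq_left (hprime m₀) hltAC, ordp_neg (hprime m₀), hRval]
      rw [hordB2] at hordBval
      have h5 : (-(multiplicity (P m₀) b₂ : ℤ) : ℤ) = e1 - vv := by exact_mod_cast hordBval
      refine ⟨m₀, hm₀, ?_⟩
      show multiplicity p b₁ ≤ multiplicity (P m₀) b₂
      omega
  · -- no shift of p divides b₂ : contradiction
    push_neg at hex
    have hS1 : ∀ m : ℤ, 0 ≤ m → 0 ≤ Ee m :=
      chain_pos 0 le_rfl (fun m _ => hex (m + 1))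
    have hS2 : ∀ m : ℤ, m ≤ -1 → 0 ≤ Ee m :=
      chain_neg (-1) le_rfl (fun m _ => hex m)
    exfalso
    refine idx0 (hex 0) (lt_min ?_ ?_)
    · refine lt_of_lt_of_le ?_ (hS2 (-1) le_rfl)
      exact_mod_cast (by omega : (-(α : ℤ) : ℤ) < 0)
    · refine lt_of_lt_of_le ?_ (hS1 0 le_rfl)
      exact_mod_cast (by omega : (-(α : ℤ) : ℤ) < 0)

lemma uniq_shift {b f : F[X]} (hsf : ShiftFree b) (hf : Irreducible f) (m m' : ℤ)
    (h1 : f.comp (X + C ((m : ℤ) : F)) ∣ b) (h2 : f.comp (X + C ((m' : ℤ) : F)) ∣ b) :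
    m = m' := by
  have h3 : (f.comp (X + C ((m' : ℤ) : F))).comp (X + C (((m - m' : ℤ)) : F))
      = f.comp (X + C ((m : ℤ) : F)) := by
    rw [comp_comp]
    congr 2
    push_cast
    ring
  have h4 : (f.comp (X + C ((m' : ℤ) : F))).comp (X + C (((m - m' : ℤ)) : F)) ∣ b := by
    rw [h3]; exact h1
  have := shiftFree_int_eq_zero hsf (irreducible_comp hf _) (m - m') h2 h4
  omega

/-- One direction of the shift-relation. -/
lemma dir (u v a₁ b₁ a₂ b₂ c s t : F[X]) (hv : v ≠ 0) (ht : t ≠ 0)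
    (hsf₁ : ShiftFree b₁) (hsf₂ : ShiftFree b₂)
    (hcop₁ : IsCoprime a₁ b₁) (hcop₂ : IsCoprime a₂ b₂)
    (hsp₁ : StronglyPrime b₁ u v) (hsp₂ : StronglyPrime b₂ u v)
    (hE : am a₁ / am b₁ - am a₂ / am b₂ + am c / am v
      = (am u / am v) * (am (s.comp (X + C (1:F))) / am (t.comp (X + C (1:F)))) - am s / am t) :
    ∀ f : F[X], f.Monic → Irreducible f → f ∣ b₁ →
    ∃! g : F[X], g.Monic ∧ Irreducible g ∧ g ∣ b₂ ∧
      (∀ n : ℕ, f ^ n ∣ b₁ ↔ g ^ n ∣ b₂) ∧ ShiftEquiv f g := by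
  intro f hmon hirr hdvd
  obtain ⟨m, hm, hle⟩ := lemA u v a₁ b₁ a₂ b₂ c s t hv ht hsf₁ hsf₂ hcop₁ hcop₂ hsp₁ hE
    hirr hmon hdvd
  have hE' : am a₂ / am b₂ - am a₁ / am b₁ + am (-c) / am v
      = (am u / am v) * (am ((-s).comp (X + C (1:F))) / am (t.comp (X + C (1:F))))
        - am (-s) / am t := by
    simp only [neg_comp, map_neg, neg_div]
    linear_combination -hE
  obtain ⟨m', hm', hle'⟩ := lemA u v a₂ b₂ a₁ b₁ (-c) (-s) t hv ht hsf₂ hsf₁ hcop₂ hcop₁ hsp₂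
    hE' (irreducible_comp hirr _) (monic_pm hmon _) hm
  -- the double shift is trivial
  have hcc : (f.comp (X + C ((m : ℤ) : F))).comp (X + C ((m' : ℤ) : F))
      = f.comp (X + C (((m + m' : ℤ)) : F)) := by
    rw [comp_comp]
    congr 2
    push_cast
    ring
  have hmm' : m + m' = 0 := by
    refine shiftFree_int_eq_zero hsf₁ hirr (m + m') hdvd ?_
    rw [← hcc]
    exact hm'
  have hgf : (f.comp (X + C ((m : ℤ) : F))).comp (X + C ((m' : ℤ) : F)) = f := by
    rw [hcc, hmm']
    norm_num
  have hle2 : multiplicity (f.comp (X + C ((m : ℤ) : F))) b₂ ≤ multiplicity f b₁ := by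
    have h9 := hle'
    rw [hgf] at h9
    exact h9
  have hmulteq : multiplicity f b₁ = multiplicity (f.comp (X + C ((m : ℤ) : F))) b₂ :=
    le_antisymm hle hle2
  have hfprime : Prime f := prime_of_irr hirr
  have hgprime : Prime (f.comp (X + C ((m : ℤ) : F))) := prime_of_irr (irreducible_comp hirr _)
  refine ⟨f.comp (X + C ((m : ℤ) : F)), ⟨monic_pm hmon _, irreducible_comp hirr _, hm, ?_, ?_⟩, ?_⟩
  · intro n
    rw [(finmult hfprime hsf₁.1).pow_dvd_iff_le_multiplicity,
      (finmult hgprime hsf₂.1).pow_dvd_iff_le_multiplicity, hmulteq]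
  · refine ⟨-m, ?_⟩
    have : (f.comp (X + C ((m : ℤ) : F))).comp (X + C (((-m) : ℤ) : F))
        = f.comp (X + C (((m + -m : ℤ)) : F)) := by
      rw [comp_comp]
      congr 2
      push_cast
      ring
    rw [this]
    norm_num
  · rintro g' ⟨hgm', hgi', hgd', _, k, hk⟩
    have hg'eq : g' = f.comp (X + C (((-k) : ℤ) : F)) := by
      rw [hk, comp_comp]
      have : ((k : ℤ) : F) + (((-k) : ℤ) : F) = (((0:ℤ)) : F) := by push_cast; ring
      rw [this]
      norm_num
    have : -k = m := by
      refine uniq_shift hsf₂ hirr (-k) m ?_ hm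
      rw [← hg'eq]
      exact hgd'
    rw [hg'eq, this]

end CharZeroPart

end SDAux

set_option maxHeartbeats 800000 in
/-- Uniqueness of significant denominators up to shift-relation: if
`r₁ = a₁/b₁ + q₁/v` and `r₂ = a₂/b₂ + q₂/v` are two residual forms of the same
rational function `f` w.r.t. the shift-reduced kernel `K = u/v`, then the
significant denominators `b₁` and `b₂` are shift-related. -/
theorem significant_denominators_shift_related
    (F : Type*) [Field F] [CharZero F]
    (σ : RatFunc F ≃+* RatFunc F)
    (hσ : ∀ p : F[X], σ (algebraMap F[X] (RatFunc F) p) =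
      algebraMap F[X] (RatFunc F) (p.comp (X + Polynomial.C 1)))
    (u v : F[X]) (hv : v ≠ 0) (huv : IsCoprime u v)
    (hsr : ∀ k : ℤ, IsCoprime u (v.comp (X + Polynomial.C (k : F))))
    (f g₁ g₂ : RatFunc F) (a₁ b₁ q₁ a₂ b₂ q₂ : F[X])
    (hdeg₁ : a₁.degree < b₁.degree) (hcop₁ : IsCoprime a₁ b₁)
    (hsf₁ : ShiftFree b₁) (hsp₁ : StronglyPrime b₁ u v)
    (hdeg₂ : a₂.degree < b₂.degree) (hcop₂ : IsCoprime a₂ b₂)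
    (hsf₂ : ShiftFree b₂) (hsp₂ : StronglyPrime b₂ u v)
    (h₁ : f = (algebraMap F[X] (RatFunc F) u / algebraMap F[X] (RatFunc F) v) * σ g₁ - g₁ +
      (algebraMap F[X] (RatFunc F) a₁ / algebraMap F[X] (RatFunc F) b₁ +
        algebraMap F[X] (RatFunc F) q₁ / algebraMap F[X] (RatFunc F) v))
    (h₂ : f = (algebraMap F[X] (RatFunc F) u / algebraMap F[X] (RatFunc F) v) * σ g₂ - g₂ +
      (algebraMap F[X] (RatFunc F) a₂ / algebraMap F[X] (RatFunc F) b₂ +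
        algebraMap F[X] (RatFunc F) q₂ / algebraMap F[X] (RatFunc F) v)) :
    ShiftRelated b₁ b₂ := by
  have hEq := h₁.symm.trans h₂
  -- a helper producing the normalized equation for a given ordering
  have mk : ∀ (w : RatFunc F) (a b a' b' q q' : F[X]),
      ((algebraMap F[X] (RatFunc F) u / algebraMap F[X] (RatFunc F) v) * σ w - w
        = algebraMap F[X] (RatFunc F) a / algebraMap F[X] (RatFunc F) b +
          algebraMap F[X] (RatFunc F) q / algebraMap F[X] (RatFunc F) v
          - (algebraMap F[X] (RatFunc F) a' / algebraMap F[X] (RatFunc F) b' +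
            algebraMap F[X] (RatFunc F) q' / algebraMap F[X] (RatFunc F) v)) →
      SDAux.am a / SDAux.am b - SDAux.am a' / SDAux.am b' + SDAux.am (q - q') / SDAux.am v
        = (SDAux.am u / SDAux.am v) *
            (SDAux.am (w.num.comp (X + C (1:F))) / SDAux.am (w.denom.comp (X + C (1:F))))
          - SDAux.am w.num / SDAux.am w.denom := by
    intro w a b a' b' q q' hw
    have hσw : σ w = SDAux.am (w.num.comp (X + C (1:F))) / SDAux.am (w.denom.comp (X + C (1:F))) := by
      conv_lhs => rw [← RatFunc.num_div_denom w]
      rw [map_div₀, hσ, hσ]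
    have hwnd : (w : RatFunc F) = SDAux.am w.num / SDAux.am w.denom :=
      (RatFunc.num_div_denom w).symm
    rw [← hσw, ← hwnd, map_sub, sub_div]
    linear_combination -hw
  constructor
  · refine SDAux.dir u v a₁ b₁ a₂ b₂ (q₁ - q₂) (g₂ - g₁).num (g₂ - g₁).denom hv
      (g₂ - g₁).denom_ne_zero hsf₁ hsf₂ hcop₁ hcop₂ hsp₁ hsp₂ ?_
    refine mk (g₂ - g₁) a₁ b₁ a₂ b₂ q₁ q₂ ?_
    rw [map_sub σ g₂ g₁]
    linear_combination -hEq
  · refine SDAux.dir u v a₂ b₂ a₁ b₁ (q₂ - q₁) (g₁ - g₂).num (g₁ - g₂).denom hv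
      (g₁ - g₂).denom_ne_zero hsf₂ hsf₁ hcop₂ hcop₁ hsp₂ hsp₁ ?_
    refine mk (g₁ - g₂) a₂ b₂ a₁ b₁ q₂ q₁ ?_
    rw [map_sub σ g₁ g₂]
    linear_combination hEq
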